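/- For every λ ∈ ℂ with Im λ > 0, there exists exactly one m ∈ ℂ with Im m > 0 satisfying the quadratic equation 2m² + λm + 1 = 0. -/

import Mathlib

/-- For every `λ ∈ ℂ` with `Im λ > 0` there is exactly one `m ∈ ℂ` with `Im m > 0`
satisfying `2m² + λm + 1 = 0`. -/
theorem stmt2 (lam : ℂ) (hlam : 0 < lam.im) :
    ∃! m : ℂ, 0 < m.im ∧ 2 * m ^ 2 + lam * m + 1 = 0 := by
  obtain ⟨s, hs⟩ := IsAlgClosed.exists_eq_mul_self (lam ^ 2 - 8 : ℂ)
  set p : ℂ := (-lam + s) / 4 with hp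
  set q : ℂ := (-lam - s) / 4 with hq
  have hproot : 2 * p ^ 2 + lam * p + 1 = 0 := by
    field_simp [hp]
    linear_combination (-1/8) * hs
  have hqroot : 2 * q ^ 2 + lam * q + 1 = 0 := by
    field_simp [hq]
    linear_combination (-1/8) * hs
  have hpq : p * q = 1 / 2 := by
    field_simp [hp, hq]
    linear_combination (1/8) * hs
  have hre : p.re * q.re - p.im * q.im = 1 / 2 := by
    have := congrArg Complex.re hpq
    simpa [Complex.mul_re] using this
  have him : p.re * q.im + p.im * q.re = 0 := by
    have := congrArg Complex.im hpq
    simpa [Complex.mul_im] using this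
  have hsum : p.im + q.im = -lam.im / 2 := by
    simp [hp, hq, Complex.div_im, Complex.add_im, Complex.sub_im, Complex.neg_im]
    ring
  have hsumneg : p.im + q.im < 0 := by rw [hsum]; linarith
  -- existence: one of p, q has positive imaginary part
  have hkey : 0 < p.im ∨ 0 < q.im := by
    by_contra h
    push_neg at h
    obtain ⟨h1, h2⟩ := h
    have hbd : 0 ≤ p.im * q.im := by nlinarith
    have key : (1 / 2 + p.im * q.im) * (p.im * q.im) + (p.im * q.re) ^ 2 = 0 := by
      linear_combination (-(p.im * q.im)) * hre + (p.im * q.re) * him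
    have hbd0 : p.im * q.im = 0 := by nlinarith [sq_nonneg (p.im * q.re)]
    have hbc0 : p.im * q.re = 0 := by nlinarith
    rcases lt_or_lt_of_add_lt_add (by simpa using hsumneg : p.im + q.im < 0 + 0) with hb | hd
    · have hd0 : q.im = 0 := by
        rcases mul_eq_zero.1 hbd0 with h' | h'
        · exact absurd h' (ne_of_lt hb)
        · exact h'
      have hc0 : q.re = 0 := by
        rcases mul_eq_zero.1 hbc0 with h' | h'
        · exact absurd h' (ne_of_lt hb)
        · exact h'
      rw [hd0, hc0] at hre; norm_num at hre
    · have hb0 : p.im = 0 := by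
        rcases mul_eq_zero.1 hbd0 with h' | h'
        · exact h'
        · exact absurd h' (ne_of_lt hd)
      have ha0 : p.re = 0 := by
        have : p.re * q.im = 0 := by rw [hb0] at him; linarith [him]
        rcases mul_eq_zero.1 this with h' | h'
        · exact h'
        · exact absurd h' (ne_of_lt hd)
      rw [hb0, ha0] at hre; norm_num at hre
  -- uniqueness helper
  have uniq : ∀ m m' : ℂ, (0 < m.im ∧ 2 * m ^ 2 + lam * m + 1 = 0) →
      (0 < m'.im ∧ 2 * m' ^ 2 + lam * m' + 1 = 0) → m' = m := by
    rintro m m' ⟨hm1, hm2⟩ ⟨hm1', hm2'⟩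
    by_contra hne
    have hdiff : (m' - m) * (2 * (m' + m) + lam) = 0 := by linear_combination hm2' - hm2
    have hsum' : 2 * (m' + m) + lam = 0 := by
      rcases mul_eq_zero.1 hdiff with h | h
      · exact absurd (sub_eq_zero.1 h) hne
      · exact h
    have : 2 * (m'.im + m.im) + lam.im = 0 := by
      have := congrArg Complex.im hsum'
      simpa [Complex.add_im, Complex.mul_im] using this
    linarith
  rcases hkey with h | h
  · exact ⟨p, ⟨h, hproot⟩, fun m' hm' => uniq p m' ⟨h, hproot⟩ hm'⟩
  · exact ⟨q, ⟨h, hqroot⟩, fun m' hm' => uniq q m' ⟨h, hqroot⟩ hm'⟩
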